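/- Let m ≥ 1 and let B be an m×m matrix over F₂. Then the digital net generated by (I, B, B²) is a (0,m,3)-net over F₂ if and only if there exists a nonsingular lower-triangular m×m matrix L over F₂ such that B = L·P_m·J_m·L⁻¹. -/

import Mathlib

open Matrix

/-- The vector of binary digits of `l` (least significant first). -/
def digitsVec (m l : ℕ) : Fin m → ZMod 2 := fun k => if l.testBit k.val then 1 else 0

/-- The map φ sending a bit vector to a real number in [0,1). -/
noncomputable def phiMap (m : ℕ) (y : Fin m → ZMod 2) : ℝ :=
  ∑ k : Fin m, ((y k).val : ℝ) / 2 ^ (k.val + 1)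

/-- The digital net (as a multiset of `2^m` points in `[0,1)^s`) generated by
matrices `C 0, …, C (s-1)`. -/
noncomputable def digitalNet (m s : ℕ) (C : Fin s → Matrix (Fin m) (Fin m) (ZMod 2)) :
    Multiset (Fin s → ℝ) :=
  (Multiset.range (2 ^ m)).map fun l => fun j => phiMap m ((C j).mulVec (digitsVec m l))

open Classical in
/-- `P` is a `(t,m,s)`-net over `F₂`: every elementary interval of volume `2^{t-m}`
contains exactly `2^t` points of `P`, counted with multiplicity. -/
def IsNet (t m s : ℕ) (P : Multiset (Fin s → ℝ)) : Prop :=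
  ∀ d : Fin s → ℕ, (∑ i, d i) = m - t →
    ∀ a : Fin s → ℕ, (∀ i, a i < 2 ^ d i) →
      (P.countP fun x => ∀ i,
        ((a i : ℝ) / 2 ^ d i ≤ x i ∧ x i < ((a i : ℝ) + 1) / 2 ^ d i)) = 2 ^ t

/-- The anti-diagonal matrix `J_m` over `F₂`. -/
def Jmat (m : ℕ) : Matrix (Fin m) (Fin m) (ZMod 2) :=
  Matrix.of fun i j => if i.val + j.val = m - 1 then 1 else 0

/-- The upper-triangular Pascal matrix `P_m` over `F₂` (0-indexed entry `(i,j)` is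
`binom(j,i) mod 2`). -/
def Pmat (m : ℕ) : Matrix (Fin m) (Fin m) (ZMod 2) :=
  Matrix.of fun i j => ((j.val.choose i.val : ℕ) : ZMod 2)

/-- A matrix is lower triangular. -/
def IsLowerTri {m : ℕ} (L : Matrix (Fin m) (Fin m) (ZMod 2)) : Prop :=
  ∀ i j : Fin m, i < j → L i j = 0


open Finset Polynomial

namespace Stmt0Aux

lemma zmod2_cases (x : ZMod 2) : x = 0 ∨ x = 1 := by revert x; decide

lemma zmod2_ne_zero {x : ZMod 2} (h : x ≠ 0) : x = 1 := by
  rcases zmod2_cases x with h0 | h1 <;> simp_all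

lemma zmod2_val_inj {x y : ZMod 2} (h : x.val = y.val) : x = y := by
  revert h; revert x y; decide

lemma two_pow_sum (n : ℕ) : ∑ i ∈ Finset.range n, 2 ^ i = 2 ^ n - 1 := by
  induction n with
  | zero => simp
  | succ n ih =>
      rw [Finset.sum_range_succ, ih]
      have : 1 ≤ 2 ^ n := Nat.one_le_two_pow
      have : (2:ℕ) ^ (n+1) = 2 ^ n + 2 ^ n := by ring
      omega

/-- LSB-first encoding of a bit vector. -/
def encL (n : ℕ) (u : Fin n → ZMod 2) : ℕ := ∑ k : Fin n, (u k).val * 2 ^ (k : ℕ)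

lemma encL_le (n : ℕ) (u : Fin n → ZMod 2) : encL n u ≤ 2 ^ n - 1 := by
  calc encL n u ≤ ∑ k : Fin n, 2 ^ (k : ℕ) := by
        apply Finset.sum_le_sum
        intro k _
        have : (u k).val < 2 := ZMod.val_lt _
        nlinarith [Nat.one_le_two_pow (n := (k:ℕ))]
    _ = ∑ k ∈ Finset.range n, 2 ^ k := by
        rw [Fin.sum_univ_eq_sum_range]
    _ = 2 ^ n - 1 := two_pow_sum n

lemma encL_lt (n : ℕ) (u : Fin n → ZMod 2) : encL n u < 2 ^ n :=
  lt_of_le_of_lt (encL_le n u) (by have : 1 ≤ 2^n := Nat.one_le_two_pow; omega)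

lemma encL_succ (n : ℕ) (u : Fin (n+1) → ZMod 2) :
    encL (n+1) u = (u 0).val + 2 * encL n (u ∘ Fin.succ) := by
  rw [encL, Fin.sum_univ_succ]
  simp only [Fin.val_zero, pow_zero, mul_one, encL, Finset.mul_sum]
  congr 1
  apply Finset.sum_congr rfl
  intro k _
  simp [Fin.val_succ, pow_succ]
  ring

lemma encL_injective (n : ℕ) : Function.Injective (encL n) := by
  induction n with
  | zero => intro u v _; funext k; exact absurd k.2 (Nat.not_lt_zero _)
  | succ n ih =>
      intro u v h
      rw [encL_succ, encL_succ] at h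
      have hu : (u 0).val < 2 := ZMod.val_lt _
      have hv : (v 0).val < 2 := ZMod.val_lt _
      have h0 : (u 0).val = (v 0).val := by omega
      have h1 : encL n (u ∘ Fin.succ) = encL n (v ∘ Fin.succ) := by omega
      have h2 := ih h1
      funext k
      rcases Fin.eq_zero_or_eq_succ k with rfl | ⟨j, rfl⟩
      · exact zmod2_val_inj h0
      · exact congrFun h2 j

lemma encL_surj (n : ℕ) {a : ℕ} (ha : a < 2 ^ n) : ∃ u, encL n u = a := by
  have hbij : Function.Bijective
      (fun u : Fin n → ZMod 2 => (⟨encL n u, encL_lt n u⟩ : Fin (2 ^ n))) := by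
    rw [Fintype.bijective_iff_injective_and_card]
    constructor
    · intro u v h
      exact encL_injective n (by simpa using congrArg Fin.val h)
    · simp [Fintype.card_fun]
  obtain ⟨u, hu⟩ := hbij.2 ⟨a, ha⟩
  exact ⟨u, congrArg Fin.val hu⟩

/-- MSB-first encoding. -/
def encM (n : ℕ) (u : Fin n → ZMod 2) : ℕ := ∑ k : Fin n, (u k).val * 2 ^ (n - 1 - (k : ℕ))

lemma encM_eq_encL (n : ℕ) (u : Fin n → ZMod 2) : encM n u = encL n (u ∘ Fin.rev) := by
  rw [encM, encL]
  rw [← Function.Bijective.sum_comp (Fin.rev_involutive (n := n)).bijective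
    (fun k => ((u ∘ Fin.rev) k).val * 2 ^ (k : ℕ))]
  apply Finset.sum_congr rfl
  intro k _
  simp only [Function.comp_apply, Fin.rev_rev, Fin.val_rev]
  congr 2
  omega

lemma encM_lt (n : ℕ) (u : Fin n → ZMod 2) : encM n u < 2 ^ n := by
  rw [encM_eq_encL]; exact encL_lt _ _

lemma encM_injective (n : ℕ) : Function.Injective (encM n) := by
  intro u v h
  rw [encM_eq_encL, encM_eq_encL] at h
  have := encL_injective n h
  funext k
  have := congrFun this k.rev
  simpa [Fin.rev_rev] using this

lemma encM_surj (n : ℕ) {a : ℕ} (ha : a < 2 ^ n) : ∃ u, encM n u = a := by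
  obtain ⟨u, hu⟩ := encL_surj n ha
  refine ⟨u ∘ Fin.rev, ?_⟩
  rw [encM_eq_encL]
  convert hu using 2
  funext k
  simp [Fin.rev_rev]


lemma digitsVec_inj {m l l' : ℕ} (hl : l < 2 ^ m) (hl' : l' < 2 ^ m)
    (h : digitsVec m l = digitsVec m l') : l = l' := by
  apply Nat.eq_of_testBit_eq
  intro i
  by_cases hi : i < m
  · have := congrFun h ⟨i, hi⟩
    simp only [digitsVec] at this
    by_cases h1 : l.testBit i <;> by_cases h2 : l'.testBit i <;> simp_all
  · have h1 : l < 2 ^ i := lt_of_lt_of_le hl (Nat.pow_le_pow_right (by norm_num) (by omega))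
    have h2 : l' < 2 ^ i := lt_of_lt_of_le hl' (Nat.pow_le_pow_right (by norm_num) (by omega))
    rw [Nat.testBit_lt_two_pow h1, Nat.testBit_lt_two_pow h2]

lemma digitsVec_surj {m : ℕ} (v : Fin m → ZMod 2) : ∃ l, l < 2 ^ m ∧ digitsVec m l = v := by
  have hbij : Function.Bijective
      (fun l : Fin (2 ^ m) => digitsVec m l.val) := by
    rw [Fintype.bijective_iff_injective_and_card]
    constructor
    · intro a b h
      exact Fin.ext (digitsVec_inj a.2 b.2 h)
    · simp [Fintype.card_fun]
  obtain ⟨l, hl⟩ := hbij.2 v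
  exact ⟨l.val, l.2, hl⟩

lemma card_filter_eq_one_iff {n : ℕ} (q : ℕ → Prop) [DecidablePred q] :
    ((Finset.range n).filter q).card = 1 ↔ ∃! l, l < n ∧ q l := by
  rw [Finset.card_eq_one]
  constructor
  · rintro ⟨a, ha⟩
    have hmem : a ∈ (Finset.range n).filter q := ha ▸ Finset.mem_singleton_self a
    rw [Finset.mem_filter, Finset.mem_range] at hmem
    refine ⟨a, hmem, ?_⟩
    intro b hb
    have : b ∈ (Finset.range n).filter q := by
      rw [Finset.mem_filter, Finset.mem_range]; exact hb
    rw [ha, Finset.mem_singleton] at this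
    exact this
  · rintro ⟨a, ha, hu⟩
    refine ⟨a, ?_⟩
    rw [Finset.eq_singleton_iff_unique_mem]
    constructor
    · rw [Finset.mem_filter, Finset.mem_range]; exact ha
    · intro b hb
      rw [Finset.mem_filter, Finset.mem_range] at hb
      exact hu b hb

lemma nat_sandwich {a A R E : ℕ} (hE : 0 < E) (hR : R < E) :
    (a * E ≤ A * E + R ∧ A * E + R < (a + 1) * E) ↔ A = a := by
  have e1 : (a+1) * E = a * E + E := by ring
  have e2 : (A+1) * E = A * E + E := by ring
  constructor
  · rintro ⟨h1, h2⟩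
    have hAa : A < a + 1 := by
      by_contra hc
      push_neg at hc
      have : (a+1) * E ≤ A * E := Nat.mul_le_mul_right E hc
      omega
    have haA : a < A + 1 := by
      by_contra hc
      push_neg at hc
      have : (A+1) * E ≤ a * E := Nat.mul_le_mul_right E hc
      omega
    omega
  · rintro rfl
    constructor
    · omega
    · have : (A+1) * E = A * E + E := by ring
      omega

lemma phi_eq_encM (m : ℕ) (y : Fin m → ZMod 2) :
    phiMap m y = (encM m y : ℝ) / 2 ^ m := by
  rw [phiMap, encM]
  push_cast
  rw [Finset.sum_div]
  apply Finset.sum_congr rfl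
  intro k _
  have hk : (k : ℕ) < m := k.2
  have hexp : (2:ℝ) ^ (m - 1 - (k:ℕ)) * 2 ^ ((k:ℕ) + 1) = 2 ^ m := by
    rw [← pow_add]; congr 1; omega
  rw [div_eq_div_iff (by positivity) (by positivity)]
  calc ((y k).val : ℝ) * (2:ℝ) ^ m = ((y k).val : ℝ) * ((2:ℝ) ^ (m - 1 - (k:ℕ)) * 2 ^ ((k:ℕ) + 1)) := by rw [hexp]
    _ = ((y k).val : ℝ) * 2 ^ (m - 1 - (k:ℕ)) * 2 ^ ((k:ℕ)+1) := by ring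

lemma encM_split {m d : ℕ} (hd : d ≤ m) (y : Fin m → ZMod 2) :
    ∃ R < 2 ^ (m - d),
      encM m y = encM d (fun k : Fin d => y (Fin.castLE hd k)) * 2 ^ (m - d) + R := by
  classical
  set R := ∑ k ∈ Finset.range (m - d), (if h : d + k < m then (y ⟨d + k, h⟩).val else 0) * 2 ^ (m - 1 - (d + k)) with hR
  refine ⟨R, ?_, ?_⟩
  · have hle : R ≤ ∑ k ∈ Finset.range (m - d), 2 ^ (m - d - 1 - k) := by
      apply Finset.sum_le_sum
      intro k hk
      rw [Finset.mem_range] at hk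
      have h1 : d + k < m := by omega
      rw [dif_pos h1]
      have : (y ⟨d + k, h1⟩).val < 2 := ZMod.val_lt _
      have he : m - 1 - (d + k) = m - d - 1 - k := by omega
      rw [he]
      nlinarith [Nat.one_le_two_pow (n := m - d - 1 - k)]
    have hsum : ∑ k ∈ Finset.range (m - d), 2 ^ (m - d - 1 - k) = 2 ^ (m - d) - 1 := by
      rw [Finset.sum_range_reflect (fun i => 2 ^ i) (m - d), two_pow_sum]
    have h1 : (1:ℕ) ≤ 2 ^ (m - d) := Nat.one_le_two_pow
    omega
  · have encM_range : ∀ (n : ℕ) (u : Fin n → ZMod 2), encM n u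
        = ∑ k ∈ Finset.range n, (if h : k < n then (u ⟨k, h⟩).val else 0) * 2 ^ (n - 1 - k) := by
      intro n u
      rw [encM, ← Fin.sum_univ_eq_sum_range
        (fun k => (if h : k < n then (u ⟨k, h⟩).val else 0) * 2 ^ (n - 1 - k)) n]
      apply Finset.sum_congr rfl
      intro k _
      rw [dif_pos k.2]
    have hfin := encM_range m y
    have hsplit : ∑ k ∈ Finset.range m, (if h : k < m then (y ⟨k, h⟩).val else 0) * 2 ^ (m - 1 - k)
        = (∑ k ∈ Finset.range d, (if h : k < m then (y ⟨k, h⟩).val else 0) * 2 ^ (m - 1 - k)) +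
          ∑ k ∈ Finset.range (m - d), (if h : d + k < m then (y ⟨d + k, h⟩).val else 0) * 2 ^ (m - 1 - (d + k)) := by
      rw [Finset.range_eq_Ico, ← Finset.sum_Ico_consecutive _ (Nat.zero_le d) hd]
      congr 1
      rw [Finset.sum_Ico_eq_sum_range]; simp only [Nat.sub_zero, zero_add]
      rw [Finset.sum_Ico_eq_sum_range]
    have hfirst : ∑ k ∈ Finset.range d, (if h : k < m then (y ⟨k, h⟩).val else 0) * 2 ^ (m - 1 - k)
        = encM d (fun k : Fin d => y (Fin.castLE hd k)) * 2 ^ (m - d) := by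
      rw [encM_range d, Finset.sum_mul]
      apply Finset.sum_congr rfl
      intro k hk
      rw [Finset.mem_range] at hk
      rw [dif_pos hk, dif_pos (lt_of_lt_of_le hk hd)]
      have hy : y (Fin.castLE hd ⟨k, hk⟩) = y ⟨k, lt_of_lt_of_le hk hd⟩ := rfl
      rw [hy, mul_assoc, ← pow_add]
      congr 2
      omega
    rw [hfin, hsplit, hfirst, hR]

lemma phi_interval_iff {m d a : ℕ} (hd : d ≤ m) (ha : a < 2 ^ d) (y : Fin m → ZMod 2) :
    ((a:ℝ)/2^d ≤ phiMap m y ∧ phiMap m y < ((a:ℝ)+1)/2^d) ↔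
    encM d (fun k => y (Fin.castLE hd k)) = a := by
  obtain ⟨R, hRlt, hN⟩ := encM_split hd y
  rw [phi_eq_encM]
  have h2d : (0:ℝ) < 2^d := by positivity
  have h2m : (0:ℝ) < 2^m := by positivity
  have hE : (0:ℕ) < 2^(m-d) := Nat.pow_pos (by norm_num)
  have hpowR : (2:ℝ)^(m-d) * 2^d = 2^m := by rw [← pow_add]; congr 1; omega
  have key1 : ((a:ℝ)/2^d ≤ (encM m y : ℝ)/2^m) ↔ (a * 2^(m-d) ≤ encM m y) := by
    rw [div_le_div_iff₀ h2d h2m]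
    have hcast : ((a * 2^(m-d) : ℕ) : ℝ) * 2^d = (a:ℝ) * 2^m := by
      push_cast
      rw [mul_assoc, hpowR]
    constructor
    · intro h
      have h2 : ((a * 2^(m-d) : ℕ) : ℝ) * 2^d ≤ ((encM m y : ℕ) : ℝ) * 2^d := by
        rw [hcast]; exact h
      have := (mul_le_mul_iff_of_pos_right h2d).1 h2
      exact_mod_cast this
    · intro h
      rw [← hcast]
      apply (mul_le_mul_iff_of_pos_right h2d).2
      exact_mod_cast h
  have key2 : ((encM m y : ℝ)/2^m < ((a:ℝ)+1)/2^d) ↔ (encM m y < (a+1) * 2^(m-d)) := by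
    rw [div_lt_div_iff₀ h2m h2d]
    have hcast : (((a+1) * 2^(m-d) : ℕ) : ℝ) * 2^d = ((a:ℝ)+1) * 2^m := by
      push_cast
      rw [mul_assoc, hpowR]
    constructor
    · intro h
      have h2 : ((encM m y : ℕ) : ℝ) * 2^d < (((a+1) * 2^(m-d) : ℕ) : ℝ) * 2^d := by
        rw [hcast]; exact h
      have := (mul_lt_mul_iff_of_pos_right h2d).1 h2
      exact_mod_cast this
    · intro h
      rw [← hcast]
      apply (mul_lt_mul_iff_of_pos_right h2d).2
      exact_mod_cast h
  rw [key1, key2, hN]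
  exact nat_sandwich hE hRlt

lemma countP_irrel {α : Type*} (p : α → Prop) (s : Multiset α) (i1 i2 : DecidablePred p) :
    @Multiset.countP α p i1 s = @Multiset.countP α p i2 s := by
  rw [Subsingleton.elim i1 i2]

/-! ### Polynomial model -/

noncomputable def polv (m : ℕ) (u : Fin m → ZMod 2) : Polynomial (ZMod 2) :=
  ∑ j : Fin m, Polynomial.C (u j) * Polynomial.X ^ (j : ℕ)

lemma polv_coeff (m : ℕ) (u : Fin m → ZMod 2) (t : ℕ) :
    (polv m u).coeff t = if h : t < m then u ⟨t, h⟩ else 0 := by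
  rw [polv, Polynomial.finset_sum_coeff]
  by_cases h : t < m
  · rw [dif_pos h, Finset.sum_eq_single (⟨t, h⟩ : Fin m)]
    · simp [Polynomial.coeff_C_mul, Polynomial.coeff_X_pow]
    · intro j _ hj
      have : t ≠ (j : ℕ) := fun hc => hj (Fin.ext hc.symm)
      simp [Polynomial.coeff_C_mul, Polynomial.coeff_X_pow, this]
    · intro hc
      exact absurd (Finset.mem_univ _) hc
  · rw [dif_neg h]
    apply Finset.sum_eq_zero
    intro j _
    have : t ≠ (j : ℕ) := fun hc => h (hc ▸ j.2)
    simp [Polynomial.coeff_C_mul, Polynomial.coeff_X_pow, this]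

lemma polv_inj {m : ℕ} {u v : Fin m → ZMod 2} (h : polv m u = polv m v) : u = v := by
  funext k
  have := congrArg (fun p => Polynomial.coeff p (k : ℕ)) h
  simp only [polv_coeff, dif_pos k.2] at this
  simpa using this

lemma polv_natDegree_le (m : ℕ) (u : Fin m → ZMod 2) : (polv m u).natDegree ≤ m - 1 := by
  rw [Polynomial.natDegree_le_iff_coeff_eq_zero]
  intro t ht
  rw [polv_coeff, dif_neg (by omega)]

lemma X1_natDegree_pow (e : ℕ) : ((X + 1 : (ZMod 2)[X]) ^ e).natDegree = e := by
  have h1 : (X + 1 : (ZMod 2)[X]) = X + Polynomial.C 1 := by rw [Polynomial.C_1]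
  rw [h1, (Polynomial.monic_X_add_C (1 : ZMod 2)).natDegree_pow, Polynomial.natDegree_X_add_C,
    mul_one]

lemma X1_comp : ((X + 1 : (ZMod 2)[X]).comp (X + 1)) = X := by
  rw [Polynomial.add_comp, Polynomial.X_comp, Polynomial.one_comp, add_assoc]
  have : (1 + 1 : (ZMod 2)[X]) = 0 := by
    rw [← Polynomial.C_1, ← Polynomial.C_add]
    norm_num
    decide
  rw [this, add_zero]

lemma comp_comp_X1 (p : (ZMod 2)[X]) : (p.comp (X + 1)).comp (X + 1) = p := by
  rw [Polynomial.comp_assoc, X1_comp, Polynomial.comp_X]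

lemma dvd_comp_X1 {p q : (ZMod 2)[X]} (h : p ∣ q) : p.comp (X + 1) ∣ q.comp (X + 1) := by
  obtain ⟨u, rfl⟩ := h
  exact ⟨u.comp (X + 1), Polynomial.mul_comp _ _ _⟩

lemma revAt_of_gt {N i : ℕ} (h : N < i) : Polynomial.revAt N i = i := by
  rw [← Polynomial.revAtFun_eq]
  unfold Polynomial.revAtFun
  rw [if_neg (by omega)]

lemma reflect_X_add_one_pow (e : ℕ) :
    Polynomial.reflect e ((X + 1 : (ZMod 2)[X]) ^ e) = (X + 1) ^ e := by
  ext t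
  rw [Polynomial.coeff_reflect, Polynomial.coeff_X_add_one_pow, Polynomial.coeff_X_add_one_pow]
  rcases le_or_gt t e with h | h
  · rw [Polynomial.revAt_le h]
    exact_mod_cast congrArg (Nat.cast : ℕ → ZMod 2) (Nat.choose_symm h)
  · rw [revAt_of_gt h]

lemma reflect_reflect' (N : ℕ) (p : (ZMod 2)[X]) :
    Polynomial.reflect N (Polynomial.reflect N p) = p := by
  ext t
  rw [Polynomial.coeff_reflect, Polynomial.coeff_reflect, Polynomial.revAt_invol]

lemma natDegree_reflect_le {p : (ZMod 2)[X]} {N : ℕ} (h : p.natDegree ≤ N) :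
    (Polynomial.reflect N p).natDegree ≤ N := by
  rw [Polynomial.natDegree_le_iff_coeff_eq_zero]
  intro t ht
  rw [Polynomial.coeff_reflect, revAt_of_gt ht]
  exact Polynomial.coeff_eq_zero_of_natDegree_lt (by omega)

lemma dvd_reflect {e N : ℕ} {p : (ZMod 2)[X]} (hN : p.natDegree ≤ N)
    (h : (X + 1 : (ZMod 2)[X]) ^ e ∣ p) : (X + 1 : (ZMod 2)[X]) ^ e ∣ Polynomial.reflect N p := by
  rcases eq_or_ne p 0 with rfl | hp
  · simp
  obtain ⟨u, rfl⟩ := h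
  have hXe : ((X + 1 : (ZMod 2)[X]) ^ e) ≠ 0 := by
    rw [show (X + 1 : (ZMod 2)[X]) = X + Polynomial.C 1 from by rw [Polynomial.C_1]]
    exact ((Polynomial.monic_X_add_C (1 : ZMod 2)).pow e).ne_zero
  have hu : u ≠ 0 := by rintro rfl; simp at hp
  have hdegmul : ((X + 1 : (ZMod 2)[X]) ^ e * u).natDegree = e + u.natDegree := by
    rw [Polynomial.natDegree_mul hXe hu, X1_natDegree_pow]
  have he : e ≤ N := by omega
  have hdu : u.natDegree ≤ N - e := by omega
  rw [show N = e + (N - e) from by omega,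
    Polynomial.reflect_mul _ _ (le_of_eq (X1_natDegree_pow e)) hdu, reflect_X_add_one_pow]
  exact dvd_mul_right _ _

lemma natDegree_comp_X1_le (p : (ZMod 2)[X]) : (p.comp (X + 1)).natDegree ≤ p.natDegree := by
  have h := Polynomial.natDegree_comp_le (p := p) (q := X + 1)
  have h1 : (X + 1 : (ZMod 2)[X]).natDegree = 1 := by
    rw [show (X + 1 : (ZMod 2)[X]) = X + Polynomial.C 1 from by rw [Polynomial.C_1]]
    exact Polynomial.natDegree_X_add_C 1
  rw [h1, mul_one] at h
  exact h

lemma polv_P (m : ℕ) (u : Fin m → ZMod 2) :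
    polv m ((Pmat m).mulVec u) = (polv m u).comp (X + 1) := by
  have hsum : (polv m u).comp (X + 1) = ∑ j : Fin m, Polynomial.C (u j) * (X + 1) ^ (j : ℕ) := by
    rw [polv, Polynomial.comp, Polynomial.eval₂_finset_sum]
    apply Finset.sum_congr rfl
    intro j _
    rw [← Polynomial.comp, Polynomial.mul_comp, Polynomial.C_comp, Polynomial.X_pow_comp]
  rw [hsum]
  ext t
  rw [polv_coeff, Polynomial.finset_sum_coeff]
  simp only [Polynomial.coeff_C_mul, Polynomial.coeff_X_add_one_pow]
  by_cases h : t < m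
  · rw [dif_pos h]
    rw [Matrix.mulVec, dotProduct]
    apply Finset.sum_congr rfl
    intro j _
    rw [Pmat]
    simp [mul_comm]
  · rw [dif_neg h]
    symm
    apply Finset.sum_eq_zero
    intro j _
    have : (j : ℕ).choose t = 0 := Nat.choose_eq_zero_of_lt (by omega)
    rw [this]
    simp

lemma polv_J (m : ℕ) (hm : 1 ≤ m) (u : Fin m → ZMod 2) :
    polv m ((Jmat m).mulVec u) = Polynomial.reflect (m - 1) (polv m u) := by
  ext t
  rw [polv_coeff, Polynomial.coeff_reflect]
  by_cases h : t < m
  · rw [dif_pos h, Polynomial.revAt_le (by omega : t ≤ m - 1), polv_coeff,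
      dif_pos (by omega : m - 1 - t < m)]
    rw [Matrix.mulVec, dotProduct]
    rw [Finset.sum_eq_single (⟨m - 1 - t, by omega⟩ : Fin m)]
    · rw [Jmat]
      simp only [Matrix.of_apply, Fin.val_mk]
      rw [if_pos (by omega)]
      rw [one_mul]
    · intro j _ hj
      rw [Jmat]
      simp only [Matrix.of_apply, Fin.val_mk]
      rw [if_neg, zero_mul]
      intro hc
      exact hj (Fin.ext (by simp only [Fin.val_mk]; omega))
    · intro hc
      exact absurd (Finset.mem_univ _) hc
  · rw [dif_neg h, revAt_of_gt (by omega : m - 1 < t), polv_coeff, dif_neg h]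

lemma matrix_ext_mulVec {m : ℕ} {A A' : Matrix (Fin m) (Fin m) (ZMod 2)}
    (h : ∀ u, A.mulVec u = A'.mulVec u) : A = A' := by
  ext i j
  have := congrFun (h (Pi.single j 1)) i
  rwa [Matrix.mulVec_single_one, Matrix.mulVec_single_one] at this

lemma Pmat_sq (m : ℕ) : Pmat m * Pmat m = 1 := by
  apply matrix_ext_mulVec
  intro u
  apply polv_inj
  rw [← Matrix.mulVec_mulVec, polv_P, polv_P, comp_comp_X1, Matrix.one_mulVec]

lemma Jmat_sq (m : ℕ) (hm : 1 ≤ m) : Jmat m * Jmat m = 1 := by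
  apply matrix_ext_mulVec
  intro u
  apply polv_inj
  rw [← Matrix.mulVec_mulVec, polv_J m hm, polv_J m hm, reflect_reflect', Matrix.one_mulVec]

section KeyPoly

private noncomputable def Fop (m : ℕ) (p : (ZMod 2)[X]) : (ZMod 2)[X] :=
  Polynomial.reflect (m - 1) ((Polynomial.reflect (m - 1) (p.comp (X + 1))).comp (X + 1))

private noncomputable def Gop (m : ℕ) (p : (ZMod 2)[X]) : (ZMod 2)[X] :=
  (Polynomial.reflect (m - 1) p).comp (X + 1)

private lemma Fop_add (m : ℕ) (p q : (ZMod 2)[X]) : Fop m (p + q) = Fop m p + Fop m q := by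
  rw [Fop, Fop, Fop, Polynomial.add_comp, Polynomial.reflect_add, Polynomial.add_comp,
    Polynomial.reflect_add]

private lemma Gop_add (m : ℕ) (p q : (ZMod 2)[X]) : Gop m (p + q) = Gop m p + Gop m q := by
  rw [Gop, Gop, Gop, Polynomial.reflect_add, Polynomial.add_comp]

private lemma Fop_Cmul (m : ℕ) (a : ZMod 2) (p : (ZMod 2)[X]) :
    Fop m (Polynomial.C a * p) = Polynomial.C a * Fop m p := by
  rw [Fop, Fop, Polynomial.mul_comp, Polynomial.C_comp, Polynomial.reflect_C_mul,
    Polynomial.mul_comp, Polynomial.C_comp, Polynomial.reflect_C_mul]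

private lemma Gop_Cmul (m : ℕ) (a : ZMod 2) (p : (ZMod 2)[X]) :
    Gop m (Polynomial.C a * p) = Polynomial.C a * Gop m p := by
  rw [Gop, Gop, Polynomial.reflect_C_mul, Polynomial.mul_comp, Polynomial.C_comp]

private lemma Fop_zero (m : ℕ) : Fop m 0 = 0 := by
  rw [Fop, Polynomial.zero_comp]
  simp

private lemma Gop_zero (m : ℕ) : Gop m 0 = 0 := by
  rw [Gop]
  simp

private lemma op_sum (op : (ZMod 2)[X] → (ZMod 2)[X])
    (hadd : ∀ p q, op (p + q) = op p + op q) (hzero : op 0 = 0)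
    {m : ℕ} (s : Finset (Fin m)) (f : Fin m → (ZMod 2)[X]) :
    op (∑ j ∈ s, f j) = ∑ j ∈ s, op (f j) := by
  induction s using Finset.induction with
  | empty => simpa using hzero
  | insert _ _ hj ih =>
      rw [Finset.sum_insert hj, Finset.sum_insert hj, hadd, ih]

private lemma reflect_X_pow_mul_X1_pow (j k : ℕ) :
    Polynomial.reflect (j + k) ((X : (ZMod 2)[X]) ^ j * (X + 1) ^ k) = (X + 1) ^ k := by
  rw [Polynomial.reflect_mul _ _ (le_of_eq (Polynomial.natDegree_X_pow j))
    (le_of_eq (X1_natDegree_pow k))]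
  rw [Polynomial.reflect_monomial, Polynomial.revAt_le (le_refl j), Nat.sub_self, pow_zero,
    one_mul, reflect_X_add_one_pow]

private lemma reflect_X1_pow (j k : ℕ) :
    Polynomial.reflect (j + k) ((X + 1 : (ZMod 2)[X]) ^ j) = (X + 1) ^ j * X ^ k := by
  conv_lhs => rw [← mul_one ((X + 1 : (ZMod 2)[X]) ^ j)]
  rw [Polynomial.reflect_mul _ _ (le_of_eq (X1_natDegree_pow j)) (by simp),
    reflect_X_add_one_pow, Polynomial.reflect_one]

private lemma FG_monomial (m : ℕ) (j : ℕ) (hj : j ≤ m - 1) :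
    Fop m ((X : (ZMod 2)[X]) ^ j) = Gop m ((X : (ZMod 2)[X]) ^ j) := by
  have hG : Gop m ((X : (ZMod 2)[X]) ^ j) = (X + 1) ^ (m - 1 - j) := by
    rw [Gop, Polynomial.reflect_monomial, Polynomial.revAt_le hj, Polynomial.X_pow_comp]
  have step1 : ((X : (ZMod 2)[X]) ^ j).comp (X + 1) = (X + 1) ^ j := Polynomial.X_pow_comp
  have step2 : Polynomial.reflect (m - 1) ((X + 1 : (ZMod 2)[X]) ^ j)
      = (X + 1) ^ j * X ^ (m - 1 - j) := by
    have := reflect_X1_pow j (m - 1 - j)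
    rwa [show j + (m - 1 - j) = m - 1 from by omega] at this
  have step3 : (((X + 1 : (ZMod 2)[X]) ^ j) * X ^ (m - 1 - j)).comp (X + 1)
      = X ^ j * (X + 1) ^ (m - 1 - j) := by
    rw [Polynomial.mul_comp, Polynomial.pow_comp, Polynomial.pow_comp, X1_comp,
      Polynomial.X_comp]
  have step4 : Polynomial.reflect (m - 1) ((X : (ZMod 2)[X]) ^ j * (X + 1) ^ (m - 1 - j))
      = (X + 1) ^ (m - 1 - j) := by
    have := reflect_X_pow_mul_X1_pow j (m - 1 - j)
    rwa [show j + (m - 1 - j) = m - 1 from by omega] at this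
  rw [Fop, step1, step2, step3, step4, hG]

lemma keypoly (m : ℕ) (u : Fin m → ZMod 2) :
    Polynomial.reflect (m - 1) ((Polynomial.reflect (m - 1)
        ((polv m u).comp (X + 1))).comp (X + 1))
      = (Polynomial.reflect (m - 1) (polv m u)).comp (X + 1) := by
  have hF := op_sum (Fop m) (Fop_add m) (Fop_zero m) Finset.univ
    (fun j : Fin m => Polynomial.C (u j) * X ^ (j : ℕ))
  have hG := op_sum (Gop m) (Gop_add m) (Gop_zero m) Finset.univ
    (fun j : Fin m => Polynomial.C (u j) * X ^ (j : ℕ))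
  have : Fop m (polv m u) = Gop m (polv m u) := by
    rw [polv, hF, hG]
    apply Finset.sum_congr rfl
    intro j _
    rw [Fop_Cmul, Gop_Cmul, FG_monomial m (j : ℕ) (by omega)]
  exact this

lemma Rmat_sq (m : ℕ) (hm : 1 ≤ m) :
    (Jmat m * Pmat m) * (Jmat m * Pmat m) = Pmat m * Jmat m := by
  apply matrix_ext_mulVec
  intro u
  apply polv_inj
  rw [← Matrix.mulVec_mulVec, ← Matrix.mulVec_mulVec, ← Matrix.mulVec_mulVec,
    ← Matrix.mulVec_mulVec]
  rw [polv_J m hm, polv_P, polv_J m hm, polv_P, polv_P, polv_J m hm]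
  exact keypoly m u

end KeyPoly

/-! ### Lower-triangular machinery and the reverse direction -/

lemma lower_blockTriangular {m : ℕ} {L : Matrix (Fin m) (Fin m) (ZMod 2)} (h : IsLowerTri L) :
    L.BlockTriangular OrderDual.toDual := fun i j hij => h i j hij

lemma lowerTri_det {m : ℕ} {L : Matrix (Fin m) (Fin m) (ZMod 2)} (h : IsLowerTri L) :
    L.det = ∏ i, L i i :=
  Matrix.det_of_lowerTriangular L (lower_blockTriangular h)

lemma inv_lowerTri {m : ℕ} {L : Matrix (Fin m) (Fin m) (ZMod 2)} (hL : IsLowerTri L)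
    (hU : IsUnit L) : IsLowerTri L⁻¹ := by
  haveI := L.invertibleOfIsUnitDet ((Matrix.isUnit_iff_isUnit_det L).1 hU)
  have h2 := Matrix.blockTriangular_inv_of_blockTriangular (lower_blockTriangular hL)
  intro i j hij
  exact h2 hij

lemma lower_trunc {m : ℕ} {L : Matrix (Fin m) (Fin m) (ZMod 2)} (hL : IsLowerTri L)
    {u : Fin m → ZMod 2} {dd : ℕ} (h : ∀ i : Fin m, i.val < dd → u i = 0) :
    ∀ i : Fin m, i.val < dd → (L.mulVec u) i = 0 := by
  intro i hi
  rw [Matrix.mulVec, dotProduct]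
  apply Finset.sum_eq_zero
  intro j _
  rcases lt_or_ge (i : ℕ) (j : ℕ) with hij | hij
  · rw [hL i j (by exact_mod_cast hij), zero_mul]
  · rw [h j (by omega), mul_zero]

lemma isCoprime_X_X1 : IsCoprime (X : (ZMod 2)[X]) (X + 1) := by
  refine ⟨1, 1, ?_⟩
  rw [one_mul, one_mul]
  have hXX : (X + (X + 1) : (ZMod 2)[X]) = X * (1 + 1) + 1 := by ring
  have h2 : (1 + 1 : (ZMod 2)[X]) = 0 := by
    rw [← Polynomial.C_1, ← Polynomial.C_add]
    norm_num
    decide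
  rw [hXX, h2, mul_zero, zero_add]

end Stmt0Aux

/-- Unique-solvability condition. -/
def UCond (m : ℕ) (C : Fin 3 → Matrix (Fin m) (Fin m) (ZMod 2)) : Prop :=
  ∀ d : Fin 3 → ℕ, (∑ i, d i) = m →
    ∀ t : (j : Fin 3) → (Fin (d j) → ZMod 2),
      ∃! v : Fin m → ZMod 2, ∀ (j : Fin 3) (k : Fin m) (hk : k.val < d j),
        (C j).mulVec v k = t j ⟨k.val, hk⟩

/-- Kernel condition. -/
def KCond (m : ℕ) (C : Fin 3 → Matrix (Fin m) (Fin m) (ZMod 2)) : Prop :=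
  ∀ d : Fin 3 → ℕ, (∑ i, d i) = m →
    ∀ v : Fin m → ZMod 2,
      (∀ (j : Fin 3) (k : Fin m), k.val < d j → (C j).mulVec v k = 0) → v = 0

namespace Stmt0Aux

lemma isNet_iff_UCond (m : ℕ) (C : Fin 3 → Matrix (Fin m) (Fin m) (ZMod 2)) :
    IsNet 0 m 3 (digitalNet m 3 C) ↔ UCond m C := by
  classical
  have key : ∀ (p : (Fin 3 → ℝ) → Prop) (inst : DecidablePred p),
      (@Multiset.countP _ p inst (digitalNet m 3 C) = 1 ↔
        ∃! l, l < 2 ^ m ∧ p (fun j => phiMap m ((C j).mulVec (digitsVec m l)))) := by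
    intro p inst
    letI := inst
    rw [digitalNet, Multiset.countP_map]
    have hfe : Multiset.filter (fun l => p (fun j => phiMap m ((C j).mulVec (digitsVec m l))))
        (Multiset.range (2 ^ m))
        = ((Finset.range (2 ^ m)).filter
            (fun l => p (fun j => phiMap m ((C j).mulVec (digitsVec m l))))).val := rfl
    rw [show (Multiset.card (Multiset.filter
        (fun l => p (fun j => phiMap m ((C j).mulVec (digitsVec m l)))) (Multiset.range (2 ^ m))))
        = ((Finset.range (2 ^ m)).filter
            (fun l => p (fun j => phiMap m ((C j).mulVec (digitsVec m l))))).card from rfl]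
    exact card_filter_eq_one_iff _
  have hbridge : ∀ (d : Fin 3 → ℕ) (hdle : ∀ j, d j ≤ m) (a : Fin 3 → ℕ)
      (hab : ∀ j, a j < 2 ^ d j) (t : (j : Fin 3) → Fin (d j) → ZMod 2)
      (hta : ∀ j, encM (d j) (t j) = a j) (v : Fin m → ZMod 2),
      ((∀ i : Fin 3, ((a i : ℝ)/2^(d i) ≤ phiMap m ((C i).mulVec v) ∧
          phiMap m ((C i).mulVec v) < ((a i : ℝ)+1)/2^(d i)))
       ↔ (∀ (j : Fin 3) (k : Fin m) (hk : k.val < d j),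
          (C j).mulVec v k = t j ⟨k.val, hk⟩)) := by
    intro d hdle a hab t hta v
    constructor
    · intro h j k hk
      have h1 := (phi_interval_iff (hdle j) (hab j) _).1 (h j)
      rw [← hta j] at h1
      have heq := encM_injective (d j) h1
      have := congrFun heq ⟨k.val, hk⟩
      have hc : Fin.castLE (hdle j) ⟨k.val, hk⟩ = k := Fin.ext rfl
      rw [hc] at this
      exact this
    · intro h i
      apply (phi_interval_iff (hdle i) (hab i) _).2
      rw [← hta i]
      congr 1
      funext k
      have hkk : (Fin.castLE (hdle i) k).val < d i := by simpa using k.2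
      exact h i (Fin.castLE (hdle i) k) hkk
  constructor
  · intro hnet d hd t
    have hdle : ∀ j, d j ≤ m := fun j => by
      rw [← hd]; exact Finset.single_le_sum (fun i _ => Nat.zero_le (d i)) (Finset.mem_univ j)
    set a : Fin 3 → ℕ := fun j => encM (d j) (t j) with ha
    have hab : ∀ j, a j < 2 ^ d j := fun j => encM_lt _ _
    have h1 := hnet d (by simpa using hd) a hab
    rw [pow_zero] at h1
    rw [countP_irrel _ _ _ (Classical.decPred _)] at h1
    have h2 := (key _ (Classical.decPred _)).1 h1
    obtain ⟨l0, ⟨hl0, hp0⟩, huniq⟩ := h2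
    refine ⟨digitsVec m l0, ?_, ?_⟩
    · exact (hbridge d hdle a hab t (fun j => rfl) _).1 hp0
    · intro v hv
      obtain ⟨l, hl, rfl⟩ := digitsVec_surj v
      have := huniq l ⟨hl, (hbridge d hdle a hab t (fun j => rfl) _).2 hv⟩
      rw [this]
  · intro hU d hd a hab
    rw [Nat.sub_zero] at hd
    have hdle : ∀ j, d j ≤ m := fun j => by
      rw [← hd]; exact Finset.single_le_sum (fun i _ => Nat.zero_le (d i)) (Finset.mem_univ j)
    choose t ht using fun j => encM_surj (d j) (hab j)
    obtain ⟨v0, hv0, hvuniq⟩ := hU d hd t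
    obtain ⟨l0, hl0, hvl0⟩ := digitsVec_surj v0
    rw [pow_zero, countP_irrel _ _ _ (Classical.decPred _)]
    apply (key _ (Classical.decPred _)).2
    refine ⟨l0, ⟨hl0, ?_⟩, ?_⟩
    · apply (hbridge d hdle a hab t ht _).2
      rw [hvl0]
      exact hv0
    · intro l ⟨hl, hp⟩
      have hv := (hbridge d hdle a hab t ht _).1 hp
      have := hvuniq _ hv
      rw [← hvl0] at this
      exact digitsVec_inj hl hl0 this

lemma UCond_iff_KCond (m : ℕ) (C : Fin 3 → Matrix (Fin m) (Fin m) (ZMod 2)) :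
    UCond m C ↔ KCond m C := by
  constructor
  · intro hU d hd v hv
    obtain ⟨v0, hv0, huniq⟩ := hU d hd (fun j _ => 0)
    have h1 : v = v0 := huniq v (fun j k hk => hv j k hk)
    have h2 : (0 : Fin m → ZMod 2) = v0 :=
      huniq 0 (fun j k hk => by rw [Matrix.mulVec_zero]; rfl)
    rw [h1, ← h2]
  · intro hK d hd t
    have hdle : ∀ j, d j ≤ m := fun j => by
      rw [← hd]; exact Finset.single_le_sum (fun i _ => Nat.zero_le (d i)) (Finset.mem_univ j)
    set Φ : (Fin m → ZMod 2) → ((j : Fin 3) → (Fin (d j) → ZMod 2)) :=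
      fun v j k => (C j).mulVec v (Fin.castLE (hdle j) k) with hΦ
    have hinj : Function.Injective Φ := by
      intro u v h
      have hz : ∀ (j : Fin 3) (k : Fin m), k.val < d j → (C j).mulVec (u - v) k = 0 := by
        intro j k hk
        rw [Matrix.mulVec_sub]
        have := congrFun (congrFun h j) ⟨k.val, hk⟩
        simp only [hΦ] at this
        have hc : Fin.castLE (hdle j) ⟨k.val, hk⟩ = k := Fin.ext rfl
        rw [hc] at this
        simp [this, sub_eq_zero]
      have := hK d hd (u - v) hz
      exact sub_eq_zero.1 this
    have hbij : Function.Bijective Φ := by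
      rw [Fintype.bijective_iff_injective_and_card]
      refine ⟨hinj, ?_⟩
      have hL : Fintype.card (Fin m → ZMod 2) = 2 ^ m := by
        rw [Fintype.card_fun]; simp
      have hR : Fintype.card ((j : Fin 3) → Fin (d j) → ZMod 2) = 2 ^ m := by
        rw [Fintype.card_pi]
        have : ∀ j : Fin 3, Fintype.card (Fin (d j) → ZMod 2) = 2 ^ d j := by
          intro j; rw [Fintype.card_fun]; simp
        rw [Finset.prod_congr rfl (fun j _ => this j), Finset.prod_pow_eq_pow_sum, hd]
      rw [hL, hR]
    obtain ⟨v0, hv0⟩ := hbij.2 t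
    refine ⟨v0, ?_, ?_⟩
    · intro j k hk
      have := congrFun (congrFun hv0 j) ⟨k.val, hk⟩
      simp only [hΦ] at this
      have hc : Fin.castLE (hdle j) ⟨k.val, hk⟩ = k := Fin.ext rfl
      rw [hc] at this
      exact this
    · intro v hv
      apply hinj
      rw [hv0]
      funext j k
      have hkk : (Fin.castLE (hdle j) k).val < d j := by simpa using k.2
      have := hv j (Fin.castLE (hdle j) k) hkk
      simp only [hΦ]
      exact this

lemma KCond_of_conj (m : ℕ) (hm : 1 ≤ m) (B L : Matrix (Fin m) (Fin m) (ZMod 2))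
    (hLtri : IsLowerTri L) (hLunit : IsUnit L) (hB : B = L * Pmat m * Jmat m * L⁻¹) :
    KCond m ![1, B, B ^ 2] := by
  intro d hd v hv
  set Q : Matrix (Fin m) (Fin m) (ZMod 2) := Pmat m * Jmat m with hQdef
  have hdet := (Matrix.isUnit_iff_isUnit_det L).1 hLunit
  have hLL : L * L⁻¹ = 1 := Matrix.mul_nonsing_inv L hdet
  have hLL' : L⁻¹ * L = 1 := Matrix.nonsing_inv_mul L hdet
  have hLinv_tri : IsLowerTri L⁻¹ := inv_lowerTri hLtri hLunit
  have hBQ : B = L * Q * L⁻¹ := by rw [hB, hQdef, Matrix.mul_assoc L (Pmat m) (Jmat m)]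
  have hdle : ∀ j : Fin 3, d j ≤ m := fun j => by
    rw [← hd]; exact Finset.single_le_sum (fun i _ => Nat.zero_le (d i)) (Finset.mem_univ j)
  have hsum3 : d 0 + d 1 + d 2 = m := by rw [← hd, Fin.sum_univ_three]
  have h0 : ∀ k : Fin m, k.val < d 0 → v k = 0 := by
    intro k hk
    have := hv 0 k hk
    rwa [show (![1, B, B ^ 2] : Fin 3 → Matrix (Fin m) (Fin m) (ZMod 2)) 0 = 1 from rfl,
      Matrix.one_mulVec] at this
  have h1 : ∀ k : Fin m, k.val < d 1 → (B.mulVec v) k = 0 := by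
    intro k hk
    have := hv 1 k hk
    rwa [show (![1, B, B ^ 2] : Fin 3 → Matrix (Fin m) (Fin m) (ZMod 2)) 1 = B from rfl] at this
  have h2 : ∀ k : Fin m, k.val < d 2 → ((B * B).mulVec v) k = 0 := by
    intro k hk
    have := hv 2 k hk
    rwa [show (![1, B, B ^ 2] : Fin 3 → Matrix (Fin m) (Fin m) (ZMod 2)) 2 = B ^ 2 from rfl,
      pow_two] at this
  set w := L⁻¹.mulVec v with hwdef
  have hv_eq : v = L.mulVec w := by
    rw [hwdef, Matrix.mulVec_mulVec, hLL, Matrix.one_mulVec]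
  have hw0 : ∀ k : Fin m, k.val < d 0 → w k = 0 := lower_trunc hLinv_tri h0
  have hQw : ∀ k : Fin m, k.val < d 1 → (Q.mulVec w) k = 0 := by
    have hBv : L⁻¹.mulVec (B.mulVec v) = Q.mulVec w := by
      rw [Matrix.mulVec_mulVec, hwdef, Matrix.mulVec_mulVec]
      congr 1
      rw [hBQ]
      rw [show L⁻¹ * (L * Q * L⁻¹) = (L⁻¹ * L) * (Q * L⁻¹) from by
        simp only [Matrix.mul_assoc], hLL', Matrix.one_mul]
    intro k hk
    rw [← hBv]
    exact lower_trunc hLinv_tri h1 k hk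
  have hQQw : ∀ k : Fin m, k.val < d 2 → ((Q * Q).mulVec w) k = 0 := by
    have hBv : L⁻¹.mulVec ((B * B).mulVec v) = (Q * Q).mulVec w := by
      rw [Matrix.mulVec_mulVec, hwdef, Matrix.mulVec_mulVec]
      congr 1
      rw [hBQ]
      rw [show L⁻¹ * (L * Q * L⁻¹ * (L * Q * L⁻¹)) = (L⁻¹ * L) * (Q * ((L⁻¹ * L) * (Q * L⁻¹)))
        from by simp only [Matrix.mul_assoc], hLL', Matrix.one_mul, Matrix.one_mul,
        show Q * (Q * L⁻¹) = Q * Q * L⁻¹ from by simp only [Matrix.mul_assoc]]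
    intro k hk
    rw [← hBv]
    exact lower_trunc hLinv_tri h2 k hk
  set f := polv m w with hfdef
  have hd0 : (X : (ZMod 2)[X]) ^ (d 0) ∣ f := by
    rw [Polynomial.X_pow_dvd_iff]
    intro t ht
    have htm : t < m := lt_of_lt_of_le ht (hdle 0)
    rw [hfdef, polv_coeff, dif_pos htm]
    exact hw0 ⟨t, htm⟩ ht
  have hg1 : polv m (Q.mulVec w) = (Polynomial.reflect (m - 1) f).comp (X + 1) := by
    rw [show Q.mulVec w = (Pmat m).mulVec ((Jmat m).mulVec w) from
      (Matrix.mulVec_mulVec w (Pmat m) (Jmat m)).symm, polv_P, polv_J m hm]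
  have hd1X : (X : (ZMod 2)[X]) ^ (d 1) ∣ (Polynomial.reflect (m - 1) f).comp (X + 1) := by
    rw [← hg1, Polynomial.X_pow_dvd_iff]
    intro t ht
    have htm : t < m := lt_of_lt_of_le ht (hdle 1)
    rw [polv_coeff, dif_pos htm]
    exact hQw ⟨t, htm⟩ ht
  have hd1 : (X + 1 : (ZMod 2)[X]) ^ (d 1) ∣ f := by
    have ha := dvd_comp_X1 hd1X
    rw [Polynomial.X_pow_comp, comp_comp_X1] at ha
    have hb := dvd_reflect (natDegree_reflect_le (polv_natDegree_le m w)) ha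
    rwa [reflect_reflect'] at hb
  have hg2 : polv m ((Q * Q).mulVec w)
      = (Polynomial.reflect (m - 1) ((Polynomial.reflect (m - 1) f).comp (X + 1))).comp
          (X + 1) := by
    rw [show (Q * Q).mulVec w = Q.mulVec (Q.mulVec w) from
      (Matrix.mulVec_mulVec w Q Q).symm]
    rw [show Q.mulVec (Q.mulVec w) = (Pmat m).mulVec ((Jmat m).mulVec (Q.mulVec w)) from
      (Matrix.mulVec_mulVec _ (Pmat m) (Jmat m)).symm, polv_P, polv_J m hm, hg1]
  have hd2X : (X : (ZMod 2)[X]) ^ (d 2)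
      ∣ (Polynomial.reflect (m - 1) ((Polynomial.reflect (m - 1) f).comp (X + 1))).comp
          (X + 1) := by
    rw [← hg2, Polynomial.X_pow_dvd_iff]
    intro t ht
    have htm : t < m := lt_of_lt_of_le ht (hdle 2)
    rw [polv_coeff, dif_pos htm]
    exact hQQw ⟨t, htm⟩ ht
  have hg1deg : ((Polynomial.reflect (m - 1) f).comp (X + 1)).natDegree ≤ m - 1 :=
    le_trans (natDegree_comp_X1_le _) (natDegree_reflect_le (polv_natDegree_le m w))
  have hd2refl : (X : (ZMod 2)[X]) ^ (d 2) ∣ Polynomial.reflect (m - 1) f := by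
    have ha := dvd_comp_X1 hd2X
    rw [Polynomial.X_pow_comp, comp_comp_X1] at ha
    have hb := dvd_reflect (natDegree_reflect_le hg1deg) ha
    rw [reflect_reflect'] at hb
    have hc := dvd_comp_X1 hb
    rwa [Polynomial.pow_comp, X1_comp, comp_comp_X1] at hc
  have hcoefhi : ∀ N, m - d 2 ≤ N → f.coeff N = 0 := by
    intro N hN
    by_cases hNm : N < m
    · have ht : m - 1 - N < d 2 := by omega
      have := (Polynomial.X_pow_dvd_iff.1 hd2refl) (m - 1 - N) ht
      rw [Polynomial.coeff_reflect, Polynomial.revAt_le (by omega : m - 1 - N ≤ m - 1)] at this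
      rwa [show m - 1 - (m - 1 - N) = N from by omega] at this
    · rw [hfdef, polv_coeff, dif_neg hNm]
  have hf0 : f = 0 := by
    by_contra hf
    have hcop : IsCoprime ((X : (ZMod 2)[X]) ^ (d 0)) ((X + 1) ^ (d 1)) :=
      isCoprime_X_X1.pow
    have hdvd : (X : (ZMod 2)[X]) ^ (d 0) * (X + 1) ^ (d 1) ∣ f := hcop.mul_dvd hd0 hd1
    have hne : ((X : (ZMod 2)[X]) ^ (d 0)) ≠ 0 := pow_ne_zero _ Polynomial.X_ne_zero
    have hne1 : ((X + 1 : (ZMod 2)[X]) ^ (d 1)) ≠ 0 := by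
      rw [show (X + 1 : (ZMod 2)[X]) = X + Polynomial.C 1 from by rw [Polynomial.C_1]]
      exact ((Polynomial.monic_X_add_C (1 : ZMod 2)).pow _).ne_zero
    have hdd := Polynomial.natDegree_le_of_dvd hdvd hf
    rw [Polynomial.natDegree_mul hne hne1, Polynomial.natDegree_X_pow, X1_natDegree_pow] at hdd
    have hlead : f.coeff f.natDegree ≠ 0 := by
      rw [← Polynomial.leadingCoeff]
      exact Polynomial.leadingCoeff_ne_zero.2 hf
    have hdeglt : f.natDegree < m - d 2 := by
      by_contra hc
      push_neg at hc
      exact hlead (hcoefhi _ hc)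
    omega
  have hw_eq : w = 0 := by
    apply polv_inj (m := m)
    rw [← hfdef, hf0]
    simp [polv]
  rw [hv_eq, hw_eq, Matrix.mulVec_zero]


/-! ### Flag machinery -/

open Module

def Ksub (m : ℕ) (B : Matrix (Fin m) (Fin m) (ZMod 2)) (a b c : ℕ) :
    Submodule (ZMod 2) (Fin m → ZMod 2) where
  carrier := {v | (∀ k : Fin m, (k : ℕ) < a → v k = 0) ∧
    (∀ k : Fin m, (k : ℕ) < b → (B.mulVec v) k = 0) ∧
    (∀ k : Fin m, (k : ℕ) < c → ((B * B).mulVec v) k = 0)}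
  add_mem' := by
    rintro v u ⟨hv1, hv2, hv3⟩ ⟨hu1, hu2, hu3⟩
    refine ⟨fun k hk => ?_, fun k hk => ?_, fun k hk => ?_⟩
    · simp only [Pi.add_apply, hv1 k hk, hu1 k hk, add_zero]
    · simp only [Matrix.mulVec_add, Pi.add_apply, hv2 k hk, hu2 k hk, add_zero]
    · simp only [Matrix.mulVec_add, Pi.add_apply, hv3 k hk, hu3 k hk, add_zero]
  zero_mem' := by
    refine ⟨fun k _ => rfl, fun k hk => ?_, fun k hk => ?_⟩ <;>
      simp [Matrix.mulVec_zero]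
  smul_mem' := by
    rintro t v ⟨hv1, hv2, hv3⟩
    refine ⟨fun k hk => ?_, fun k hk => ?_, fun k hk => ?_⟩
    · simp only [Pi.smul_apply, hv1 k hk, smul_zero]
    · simp only [Matrix.mulVec_smul, Pi.smul_apply, hv2 k hk, smul_zero]
    · simp only [Matrix.mulVec_smul, Pi.smul_apply, hv3 k hk, smul_zero]

lemma mem_Ksub {m : ℕ} {B : Matrix (Fin m) (Fin m) (ZMod 2)} {a b c : ℕ}
    {v : Fin m → ZMod 2} :
    v ∈ Ksub m B a b c ↔ (∀ k : Fin m, (k : ℕ) < a → v k = 0) ∧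
      (∀ k : Fin m, (k : ℕ) < b → (B.mulVec v) k = 0) ∧
      (∀ k : Fin m, (k : ℕ) < c → ((B * B).mulVec v) k = 0) := Iff.rfl

lemma Ksub_le {m : ℕ} {B : Matrix (Fin m) (Fin m) (ZMod 2)} {a a' b b' c c' : ℕ}
    (ha : a ≤ a') (hb : b ≤ b') (hc : c ≤ c') : Ksub m B a' b' c' ≤ Ksub m B a b c := by
  rintro v ⟨h1, h2, h3⟩
  exact ⟨fun k hk => h1 k (by omega), fun k hk => h2 k (by omega), fun k hk => h3 k (by omega)⟩

noncomputable def trunc3 {m : ℕ} (B : Matrix (Fin m) (Fin m) (ZMod 2)) (a b c : ℕ)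
    (ha : a ≤ m) (hb : b ≤ m) (hc : c ≤ m) :
    (Fin m → ZMod 2) →ₗ[ZMod 2]
      ((Fin a → ZMod 2) × (Fin b → ZMod 2) × (Fin c → ZMod 2)) :=
  LinearMap.prod (LinearMap.funLeft _ _ (Fin.castLE ha))
    (LinearMap.prod ((LinearMap.funLeft _ _ (Fin.castLE hb)).comp (Matrix.mulVecLin B))
      ((LinearMap.funLeft _ _ (Fin.castLE hc)).comp (Matrix.mulVecLin (B * B))))

lemma Ksub_eq_ker {m : ℕ} (B : Matrix (Fin m) (Fin m) (ZMod 2)) (a b c : ℕ)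
    (ha : a ≤ m) (hb : b ≤ m) (hc : c ≤ m) :
    Ksub m B a b c = LinearMap.ker (trunc3 B a b c ha hb hc) := by
  ext v
  rw [LinearMap.mem_ker, mem_Ksub]
  constructor
  · rintro ⟨h1, h2, h3⟩
    refine Prod.ext ?_ (Prod.ext ?_ ?_)
    · funext k
      exact h1 (Fin.castLE ha k) (by simpa using k.2)
    · funext k
      exact h2 (Fin.castLE hb k) (by simpa using k.2)
    · funext k
      exact h3 (Fin.castLE hc k) (by simpa using k.2)
  · intro h
    refine ⟨fun k hk => ?_, fun k hk => ?_, fun k hk => ?_⟩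
    · have := congrFun (congrArg Prod.fst h) ⟨(k : ℕ), hk⟩
      simpa [trunc3] using this
    · have := congrFun (congrArg (fun z => z.2.1) h) ⟨(k : ℕ), hk⟩
      simpa [trunc3] using this
    · have := congrFun (congrArg (fun z => z.2.2) h) ⟨(k : ℕ), hk⟩
      simpa [trunc3] using this

lemma Ksub_rank_ge {m : ℕ} (B : Matrix (Fin m) (Fin m) (ZMod 2)) (a b c : ℕ)
    (ha : a ≤ m) (hb : b ≤ m) (hc : c ≤ m) :
    m ≤ finrank (ZMod 2) (Ksub m B a b c) + (a + b + c) := by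
  rw [Ksub_eq_ker B a b c ha hb hc]
  have h1 := LinearMap.finrank_range_add_finrank_ker (trunc3 B a b c ha hb hc)
  rw [Module.finrank_fin_fun] at h1
  have h2 : finrank (ZMod 2) (LinearMap.range (trunc3 B a b c ha hb hc)) ≤ a + b + c := by
    have h3 := Submodule.finrank_le (LinearMap.range (trunc3 B a b c ha hb hc))
    rwa [Module.finrank_prod, Module.finrank_prod, Module.finrank_fin_fun,
      Module.finrank_fin_fun, Module.finrank_fin_fun, ← add_assoc] at h3
  omega

lemma rank_drop {m : ℕ} (U : Submodule (ZMod 2) (Fin m → ZMod 2))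
    (φ : (Fin m → ZMod 2) →ₗ[ZMod 2] ZMod 2) :
    finrank (ZMod 2) U ≤ finrank (ZMod 2) (U ⊓ LinearMap.ker φ : Submodule _ _) + 1 := by
  have h1 := Submodule.finrank_sup_add_finrank_inf_eq U (LinearMap.ker φ)
  have h2 := LinearMap.finrank_range_add_finrank_ker φ
  rw [Module.finrank_fin_fun] at h2
  have h3 : finrank (ZMod 2) (LinearMap.range φ) ≤ 1 := by
    have := Submodule.finrank_le (LinearMap.range φ)
    rwa [Module.finrank_self] at this
  have h4 : finrank (ZMod 2) ((U ⊔ LinearMap.ker φ : Submodule _ _)) ≤ m := by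
    have := Submodule.finrank_le (U ⊔ LinearMap.ker φ : Submodule _ _)
    rwa [Module.finrank_fin_fun] at this
  omega

lemma Ksub_succ_a {m : ℕ} (B : Matrix (Fin m) (Fin m) (ZMod 2)) (a b c : ℕ) (ha : a < m) :
    Ksub m B (a + 1) b c
      = Ksub m B a b c ⊓ LinearMap.ker (LinearMap.proj (R := ZMod 2) (⟨a, ha⟩ : Fin m)) := by
  ext v
  rw [Submodule.mem_inf, LinearMap.mem_ker, mem_Ksub, mem_Ksub]
  constructor
  · rintro ⟨h1, h2, h3⟩
    exact ⟨⟨fun k hk => h1 k (by omega), h2, h3⟩, h1 ⟨a, ha⟩ (by simp)⟩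
  · rintro ⟨⟨h1, h2, h3⟩, hz⟩
    refine ⟨fun k hk => ?_, h2, h3⟩
    rcases Nat.lt_succ_iff_lt_or_eq.1 hk with h | h
    · exact h1 k h
    · have : k = ⟨a, ha⟩ := Fin.ext h
      rw [this]
      exact hz

lemma Ksub_rank_exact {m : ℕ} (B : Matrix (Fin m) (Fin m) (ZMod 2))
    (hbot : ∀ a b c, a + b + c = m → Ksub m B a b c = ⊥) :
    ∀ n a b c, a + b + c + n = m → finrank (ZMod 2) (Ksub m B a b c) = n := by
  intro n
  induction n with
  | zero =>
      intro a b c h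
      rw [hbot a b c (by omega)]
      exact finrank_bot _ _
  | succ n ih =>
      intro a b c h
      have ha : a < m := by omega
      have hub : finrank (ZMod 2) (Ksub m B a b c) ≤ n + 1 := by
        have hdrop := rank_drop (Ksub m B a b c)
          (LinearMap.proj (R := ZMod 2) (⟨a, ha⟩ : Fin m))
        rw [← Ksub_succ_a B a b c ha, ih (a + 1) b c (by omega)] at hdrop
        exact hdrop
      have hlb := Ksub_rank_ge B a b c (by omega) (by omega) (by omega)
      omega

lemma rank_one_unique {m : ℕ} {W : Submodule (ZMod 2) (Fin m → ZMod 2)}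
    (hW : finrank (ZMod 2) W = 1) {x y : Fin m → ZMod 2} (hx : x ∈ W) (hx0 : x ≠ 0)
    (hy : y ∈ W) (hy0 : y ≠ 0) : x = y := by
  have hxW : (⟨x, hx⟩ : W) ≠ 0 := by
    simp only [ne_eq, Submodule.mk_eq_zero]
    exact hx0
  have hspan : Submodule.span (ZMod 2) {(⟨x, hx⟩ : W)} = (⊤ : Submodule (ZMod 2) W) := by
    apply Submodule.eq_top_of_finrank_eq
    rw [finrank_span_singleton hxW, hW]
  have hmem : (⟨y, hy⟩ : W) ∈ Submodule.span (ZMod 2) {(⟨x, hx⟩ : W)} := by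
    rw [hspan]; exact Submodule.mem_top
  obtain ⟨cc, hcc⟩ := Submodule.mem_span_singleton.1 hmem
  rcases zmod2_cases cc with rfl | rfl
  · rw [zero_smul] at hcc
    have := congrArg Subtype.val hcc
    exact absurd this.symm hy0
  · rw [one_smul] at hcc
    have := congrArg Subtype.val hcc
    exact this

lemma rank_one_exists {m : ℕ} {W : Submodule (ZMod 2) (Fin m → ZMod 2)}
    (hW : finrank (ZMod 2) W = 1) : ∃ x, x ∈ W ∧ x ≠ 0 := by
  by_contra hc
  push_neg at hc
  have : W = ⊥ := by
    rw [Submodule.eq_bot_iff]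
    exact hc
  rw [this, finrank_bot] at hW
  exact absurd hW (by norm_num)

noncomputable def nuv (m : ℕ) (B : Matrix (Fin m) (Fin m) (ZMod 2)) (a b c : ℕ) :
    Fin m → ZMod 2 :=
  @dite _ (∃ x, x ∈ Ksub m B a b c ∧ x ≠ 0) (Classical.propDecidable _)
    (fun h => h.choose) (fun _ => 0)

lemma nuv_mem {m : ℕ} {B : Matrix (Fin m) (Fin m) (ZMod 2)} {a b c : ℕ}
    (hrank : finrank (ZMod 2) (Ksub m B a b c) = 1) :
    nuv m B a b c ∈ Ksub m B a b c ∧ nuv m B a b c ≠ 0 := by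
  rw [nuv, dif_pos (rank_one_exists hrank)]
  exact (rank_one_exists hrank).choose_spec

lemma nuv_eq {m : ℕ} {B : Matrix (Fin m) (Fin m) (ZMod 2)} {a b c : ℕ}
    (hrank : finrank (ZMod 2) (Ksub m B a b c) = 1) {x : Fin m → ZMod 2}
    (hx : x ∈ Ksub m B a b c) (hx0 : x ≠ 0) : nuv m B a b c = x :=
  rank_one_unique hrank (nuv_mem hrank).1 (nuv_mem hrank).2 hx hx0

section NuLemmas

variable {m : ℕ} {B : Matrix (Fin m) (Fin m) (ZMod 2)}

lemma nuv_star (hbot : ∀ a b c, a + b + c = m → Ksub m B a b c = ⊥)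
    {a b c : ℕ} (h : a + b + c + 2 = m) :
    nuv m B a (b + 1) c = nuv m B (a + 1) b c + nuv m B a b (c + 1) := by
  have hrx : finrank (ZMod 2) (Ksub m B (a + 1) b c) = 1 :=
    Ksub_rank_exact B hbot 1 _ _ _ (by omega)
  have hry : finrank (ZMod 2) (Ksub m B a (b + 1) c) = 1 :=
    Ksub_rank_exact B hbot 1 _ _ _ (by omega)
  have hrz : finrank (ZMod 2) (Ksub m B a b (c + 1)) = 1 :=
    Ksub_rank_exact B hbot 1 _ _ _ (by omega)
  have hr2 : finrank (ZMod 2) (Ksub m B a b c) = 2 :=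
    Ksub_rank_exact B hbot 2 _ _ _ (by omega)
  set x := nuv m B (a + 1) b c with hxd
  set y := nuv m B a (b + 1) c with hyd
  set z := nuv m B a b (c + 1) with hzd
  have hx := nuv_mem hrx
  have hy := nuv_mem hry
  have hz := nuv_mem hrz
  have hxW : x ∈ Ksub m B a b c := Ksub_le (Nat.le_succ a) (le_refl b) (le_refl c) hx.1
  have hyW : y ∈ Ksub m B a b c := Ksub_le (le_refl a) (Nat.le_succ b) (le_refl c) hy.1
  have hzW : z ∈ Ksub m B a b c := Ksub_le (le_refl a) (le_refl b) (Nat.le_succ c) hz.1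
  have hxy : x ≠ y := by
    intro hc
    obtain ⟨p1, p2, p3⟩ := hx.1
    have hy1 : x ∈ Ksub m B a (b + 1) c := by rw [hc]; exact hy.1
    obtain ⟨q1, q2, q3⟩ := hy1
    have hmem2 : x ∈ Ksub m B (a + 1) (b + 1) c := ⟨p1, q2, p3⟩
    rw [hbot _ _ _ (by omega)] at hmem2
    exact hx.2 ((Submodule.mem_bot _).1 hmem2)
  have hxz : x ≠ z := by
    intro hc
    obtain ⟨p1, p2, p3⟩ := hx.1
    have hz1 : x ∈ Ksub m B a b (c + 1) := by rw [hc]; exact hz.1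
    obtain ⟨q1, q2, q3⟩ := hz1
    have hmem2 : x ∈ Ksub m B (a + 1) b (c + 1) := ⟨p1, p2, q3⟩
    rw [hbot _ _ _ (by omega)] at hmem2
    exact hx.2 ((Submodule.mem_bot _).1 hmem2)
  have hyz : y ≠ z := by
    intro hc
    obtain ⟨p1, p2, p3⟩ := hy.1
    have hz1 : y ∈ Ksub m B a b (c + 1) := by rw [hc]; exact hz.1
    obtain ⟨q1, q2, q3⟩ := hz1
    have hmem2 : y ∈ Ksub m B a (b + 1) (c + 1) := ⟨p1, p2, q3⟩
    rw [hbot _ _ _ (by omega)] at hmem2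
    exact hy.2 ((Submodule.mem_bot _).1 hmem2)
  have hneg : ∀ u : Fin m → ZMod 2, -u = u := by
    intro u
    have h1 : (-1 : ZMod 2) = 1 := by decide
    calc -u = (-1 : ZMod 2) • u := (neg_one_smul _ u).symm
      _ = (1 : ZMod 2) • u := by rw [h1]
      _ = u := one_smul _ u
  have hind : LinearIndependent (ZMod 2) ![x, z] := by
    rw [LinearIndependent.pair_iff]
    intro s t hst
    rcases zmod2_cases s with rfl | rfl <;> rcases zmod2_cases t with rfl | rfl
    · exact ⟨rfl, rfl⟩
    · rw [zero_smul, one_smul, zero_add] at hst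
      exact absurd hst hz.2
    · rw [zero_smul, one_smul, add_zero] at hst
      exact absurd hst hx.2
    · rw [one_smul, one_smul] at hst
      have : x = z := by
        have h1 : x = -z := eq_neg_of_add_eq_zero_left hst
        rw [h1, hneg]
      exact absurd this hxz
  have hspan : Submodule.span (ZMod 2) (Set.range ![x, z]) = Ksub m B a b c := by
    apply Submodule.eq_of_le_of_finrank_le
    · rw [Submodule.span_le]
      rintro u ⟨i, rfl⟩
      fin_cases i
      · exact hxW
      · exact hzW
    · rw [hr2, finrank_span_eq_card hind]
      simp
  have hymem : y ∈ Submodule.span (ZMod 2) (Set.range ![x, z]) := by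
    rw [hspan]; exact hyW
  rw [Submodule.mem_span_range_iff_exists_fun] at hymem
  obtain ⟨co, hco⟩ := hymem
  rw [Fin.sum_univ_two] at hco
  simp only [Matrix.cons_val_zero, Matrix.cons_val_one, Matrix.head_cons] at hco
  rcases zmod2_cases (co 0) with h0 | h0 <;> rcases zmod2_cases (co 1) with h1 | h1 <;>
    rw [h0, h1] at hco
  · rw [zero_smul, zero_smul, add_zero] at hco
    exact absurd hco.symm hy.2
  · rw [zero_smul, one_smul, zero_add] at hco
    exact absurd hco hyz.symm
  · rw [one_smul, zero_smul, add_zero] at hco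
    exact absurd hco hxy
  · rw [one_smul, one_smul] at hco
    exact hco.symm

lemma nuv_exp (hbot : ∀ a b c, a + b + c = m → Ksub m B a b c = ⊥) :
    ∀ b a, a + b + 1 ≤ m →
      nuv m B a b (m - 1 - a - b)
        = ∑ i ∈ Finset.range (b + 1),
            ((b.choose i : ZMod 2)) • nuv m B (a + i) 0 (m - 1 - (a + i)) := by
  intro b
  induction b with
  | zero =>
      intro a ha
      rw [Finset.sum_range_one]
      simp
  | succ b ih =>
      intro a ha
      have hc1 : m - 1 - a - (b + 1) = m - 2 - a - b := by omega
      have hstar := nuv_star hbot (a := a) (b := b) (c := m - 2 - a - b) (by omega)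
      rw [hc1, hstar]
      have hc2 : m - 2 - a - b + 1 = m - 1 - a - b := by omega
      have hc3 : m - 2 - a - b = m - 1 - (a + 1) - b := by omega
      have e1 : nuv m B (a + 1) b (m - 2 - a - b)
          = ∑ i ∈ Finset.range (b + 1),
              ((b.choose i : ZMod 2)) • nuv m B (a + 1 + i) 0 (m - 1 - (a + 1 + i)) := by
        rw [hc3]; exact ih (a + 1) (by omega)
      have e2 : nuv m B a b (m - 2 - a - b + 1)
          = ∑ i ∈ Finset.range (b + 1),
              ((b.choose i : ZMod 2)) • nuv m B (a + i) 0 (m - 1 - (a + i)) := by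
        rw [hc2]; exact ih a (by omega)
      rw [e1, e2]
      set w : ℕ → (Fin m → ZMod 2) := fun t => nuv m B t 0 (m - 1 - t) with hwdef
      show (∑ i ∈ Finset.range (b + 1), ((b.choose i : ZMod 2)) • w (a + 1 + i))
          + ∑ i ∈ Finset.range (b + 1), ((b.choose i : ZMod 2)) • w (a + i)
        = ∑ i ∈ Finset.range (b + 1 + 1), (((b + 1).choose i : ZMod 2)) • w (a + i)
      rw [Finset.sum_range_succ' (fun i => (((b + 1).choose i : ZMod 2)) • w (a + i)) (b + 1)]
      have hpas : ∀ i, (((b + 1).choose (i + 1) : ZMod 2)) • w (a + (i + 1))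
          = ((b.choose i : ZMod 2)) • w (a + 1 + i) + ((b.choose (i + 1) : ZMod 2)) • w (a + (i + 1)) := by
        intro i
        have hps : (b + 1).choose (i + 1) = b.choose i + b.choose (i + 1) :=
          Nat.choose_succ_succ b i
        have harg : a + 1 + i = a + (i + 1) := by omega
        rw [hps, Nat.cast_add, add_smul, harg]
      rw [Finset.sum_congr rfl (fun i _ => hpas i), Finset.sum_add_distrib]
      have hlast : ∑ i ∈ Finset.range (b + 1), ((b.choose (i + 1) : ZMod 2)) • w (a + (i + 1))
          = ∑ i ∈ Finset.range b, ((b.choose (i + 1) : ZMod 2)) • w (a + (i + 1)) := by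
        rw [Finset.sum_range_succ, Nat.choose_succ_self, Nat.cast_zero, zero_smul, add_zero]
      have hsecond : ∑ i ∈ Finset.range (b + 1), ((b.choose i : ZMod 2)) • w (a + i)
          = (∑ i ∈ Finset.range b, ((b.choose (i + 1) : ZMod 2)) • w (a + (i + 1)))
            + ((b.choose 0 : ZMod 2)) • w (a + 0) := by
        rw [Finset.sum_range_succ' (fun i => ((b.choose i : ZMod 2)) • w (a + i)) b]
      rw [hlast, hsecond]
      have h00 : (((b + 1).choose 0 : ZMod 2)) • w (a + 0) = ((b.choose 0 : ZMod 2)) • w (a + 0) := by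
        norm_num
      rw [h00]
      abel

lemma nuv_act (hbot : ∀ a b c, a + b + c = m → Ksub m B a b c = ⊥)
    {b c : ℕ} (h : b + c + 1 = m) :
    B.mulVec (nuv m B 0 b c) = nuv m B b c 0 := by
  have hr1 : finrank (ZMod 2) (Ksub m B 0 b c) = 1 :=
    Ksub_rank_exact B hbot 1 _ _ _ (by omega)
  have hr2 : finrank (ZMod 2) (Ksub m B b c 0) = 1 :=
    Ksub_rank_exact B hbot 1 _ _ _ (by omega)
  obtain ⟨hmem, hne⟩ := nuv_mem hr1
  obtain ⟨h1, h2, h3⟩ := hmem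
  have hBmem : B.mulVec (nuv m B 0 b c) ∈ Ksub m B b c 0 := by
    refine ⟨h2, fun k hk => ?_, fun k hk => absurd hk (Nat.not_lt_zero _)⟩
    rw [Matrix.mulVec_mulVec]
    exact h3 k hk
  have hBne : B.mulVec (nuv m B 0 b c) ≠ 0 := by
    intro hc
    have hmm : nuv m B 0 b c ∈ Ksub m B 0 m 0 :=
      ⟨fun k hk => absurd hk (Nat.not_lt_zero _),
       fun k _ => by rw [hc]; rfl,
       fun k hk => absurd hk (Nat.not_lt_zero _)⟩
    rw [hbot 0 m 0 (by omega)] at hmm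
    exact hne ((Submodule.mem_bot _).1 hmm)
  exact (rank_one_unique hr2 (nuv_mem hr2).1 (nuv_mem hr2).2 hBmem hBne).symm

end NuLemmas

lemma PJ_entry {m : ℕ} (hm : 1 ≤ m) (k j : Fin m) :
    (Pmat m * Jmat m) k j = (((m - 1 - (j : ℕ)).choose (k : ℕ) : ℕ) : ZMod 2) := by
  rw [Matrix.mul_apply]
  rw [Finset.sum_eq_single (⟨m - 1 - (j : ℕ), by omega⟩ : Fin m)]
  · rw [Pmat, Jmat]
    simp only [Matrix.of_apply, Fin.val_mk]
    rw [if_pos (by omega), mul_one]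
  · intro t _ ht
    rw [Jmat]
    simp only [Matrix.of_apply]
    rw [if_neg, mul_zero]
    intro hcon
    exact ht (Fin.ext (by simp only [Fin.val_mk]; omega))
  · intro hcon
    exact absurd (Finset.mem_univ _) hcon

lemma JP_entry {m : ℕ} (hm : 1 ≤ m) (k j : Fin m) :
    (Jmat m * Pmat m) k j = (((j : ℕ).choose (m - 1 - (k : ℕ)) : ℕ) : ZMod 2) := by
  rw [Matrix.mul_apply]
  rw [Finset.sum_eq_single (⟨m - 1 - (k : ℕ), by omega⟩ : Fin m)]
  · rw [Pmat, Jmat]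
    simp only [Matrix.of_apply, Fin.val_mk]
    rw [if_pos (by omega), one_mul]
  · intro t _ ht
    rw [Jmat]
    simp only [Matrix.of_apply]
    rw [if_neg, zero_mul]
    intro hcon
    exact ht (Fin.ext (by simp only [Fin.val_mk]; omega))
  · intro hcon
    exact absurd (Finset.mem_univ _) hcon

lemma exists_L (m : ℕ) (hm : 1 ≤ m) (B : Matrix (Fin m) (Fin m) (ZMod 2))
    (hK : KCond m ![1, B, B ^ 2]) :
    ∃ L : Matrix (Fin m) (Fin m) (ZMod 2),
      IsLowerTri L ∧ IsUnit L ∧ B = L * Pmat m * Jmat m * L⁻¹ := by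
  have hbot : ∀ a b c, a + b + c = m → Ksub m B a b c = ⊥ := by
    intro a b c habc
    rw [Submodule.eq_bot_iff]
    rintro v ⟨h1, h2, h3⟩
    apply hK ![a, b, c] (by rw [Fin.sum_univ_three]; simpa using habc)
    intro j k hk
    fin_cases j
    · show ((1 : Matrix (Fin m) (Fin m) (ZMod 2)) *ᵥ v) k = 0
      rw [Matrix.one_mulVec]
      exact h1 k hk
    · show (B *ᵥ v) k = 0
      exact h2 k hk
    · show ((B ^ 2) *ᵥ v) k = 0
      rw [pow_two]
      exact h3 k hk
  have hrank1 : ∀ a b c, a + b + c + 1 = m → finrank (ZMod 2) (Ksub m B a b c) = 1 :=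
    fun a b c h => Ksub_rank_exact B hbot 1 a b c (by omega)
  set w : ℕ → (Fin m → ZMod 2) := fun t => nuv m B t 0 (m - 1 - t) with hwdef
  set L : Matrix (Fin m) (Fin m) (ZMod 2) := Matrix.of (fun i j => w (j : ℕ) i) with hLdef
  have hwm : ∀ j : Fin m, w (j : ℕ) ∈ Ksub m B (j : ℕ) 0 (m - 1 - (j : ℕ)) ∧ w (j : ℕ) ≠ 0 :=
    fun j => nuv_mem (hrank1 _ _ _ (by omega))
  have hLtri : IsLowerTri L := by
    intro i j hij
    exact (hwm j).1.1 i (by exact_mod_cast hij)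
  have hdiag : ∀ j : Fin m, L j j = 1 := by
    intro j
    rcases zmod2_cases (L j j) with h0 | h1
    · exfalso
      have hmem2 : w (j : ℕ) ∈ Ksub m B ((j : ℕ) + 1) 0 (m - 1 - (j : ℕ)) := by
        refine ⟨fun k hk => ?_, fun k hk => absurd hk (Nat.not_lt_zero _), (hwm j).1.2.2⟩
        rcases Nat.lt_succ_iff_lt_or_eq.1 hk with h | h
        · exact (hwm j).1.1 k h
        · have : k = j := Fin.ext h
          rw [this]
          exact h0
      rw [hbot ((j : ℕ) + 1) 0 (m - 1 - (j : ℕ)) (by omega)] at hmem2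
      exact (hwm j).2 ((Submodule.mem_bot _).1 hmem2)
    · exact h1
  have hdet : L.det = 1 := by
    rw [lowerTri_det hLtri, Finset.prod_congr rfl (fun j _ => hdiag j)]
    simp
  have hdetu : IsUnit L.det := by rw [hdet]; exact isUnit_one
  have hLunit : IsUnit L := (Matrix.isUnit_iff_isUnit_det L).2 hdetu
  have hUcol : ∀ (j : Fin m) (i : Fin m),
      (L * (Pmat m * Jmat m)) i j = nuv m B 0 (m - 1 - (j : ℕ)) (j : ℕ) i := by
    intro j i
    have hexp := nuv_exp hbot (m - 1 - (j : ℕ)) 0 (by omega)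
    rw [show m - 1 - 0 - (m - 1 - (j : ℕ)) = (j : ℕ) from by omega] at hexp
    have hRHS : nuv m B 0 (m - 1 - (j : ℕ)) (j : ℕ) i
        = ∑ k ∈ Finset.range m,
            (((m - 1 - (j : ℕ)).choose k : ZMod 2)) * w k i := by
      rw [hexp, Finset.sum_apply]
      have h1 : ∀ i' ∈ Finset.range (m - 1 - (j : ℕ) + 1),
          (((m - 1 - (j : ℕ)).choose i' : ZMod 2) • nuv m B (0 + i') 0 (m - 1 - (0 + i'))) i
            = (((m - 1 - (j : ℕ)).choose i' : ZMod 2)) * w i' i := by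
        intro i' _
        rw [Pi.smul_apply, smul_eq_mul, zero_add]
      rw [Finset.sum_congr rfl h1]
      apply Finset.sum_subset (Finset.range_subset_range.2 (by omega))
      intro k _ hk
      rw [Finset.mem_range] at hk
      rw [Nat.choose_eq_zero_of_lt (by omega), Nat.cast_zero, zero_mul]
    rw [hRHS, Matrix.mul_apply, ← Fin.sum_univ_eq_sum_range
      (fun k => (((m - 1 - (j : ℕ)).choose k : ZMod 2)) * w k i) m]
    apply Finset.sum_congr rfl
    intro k _
    rw [PJ_entry hm k j, hLdef]
    simp only [Matrix.of_apply]
    rw [mul_comm]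
  have hVcol : ∀ (j : Fin m) (i : Fin m),
      (L * (Jmat m * Pmat m)) i j = nuv m B (m - 1 - (j : ℕ)) (j : ℕ) 0 i := by
    intro j i
    have hexp := nuv_exp hbot (j : ℕ) (m - 1 - (j : ℕ)) (by omega)
    rw [show m - 1 - (m - 1 - (j : ℕ)) - (j : ℕ) = 0 from by omega] at hexp
    have hLHS : (L * (Jmat m * Pmat m)) i j
        = ∑ k ∈ Finset.range m, (((j : ℕ).choose (m - 1 - k) : ZMod 2)) * w k i := by
      rw [Matrix.mul_apply, ← Fin.sum_univ_eq_sum_range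
        (fun k => (((j : ℕ).choose (m - 1 - k) : ZMod 2)) * w k i) m]
      apply Finset.sum_congr rfl
      intro k _
      rw [JP_entry hm k j, hLdef]
      simp only [Matrix.of_apply]
      rw [mul_comm]
    rw [hLHS, hexp, Finset.sum_apply]
    rw [← Finset.sum_range_reflect
      (fun k => (((j : ℕ).choose (m - 1 - k) : ZMod 2)) * w k i) m]
    have hstep1 : ∀ k ∈ Finset.range m,
        (((j : ℕ).choose (m - 1 - (m - 1 - k)) : ZMod 2)) * w (m - 1 - k) i
          = (((j : ℕ).choose k : ZMod 2)) * w (m - 1 - k) i := by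
      intro k hk
      rw [Finset.mem_range] at hk
      rw [show m - 1 - (m - 1 - k) = k from by omega]
    rw [Finset.sum_congr rfl hstep1]
    rw [← Finset.sum_subset (Finset.range_subset_range.2 (by omega : (j : ℕ) + 1 ≤ m))
      (by
        intro k _ hk
        rw [Finset.mem_range] at hk
        rw [Nat.choose_eq_zero_of_lt (by omega), Nat.cast_zero, zero_mul])]
    rw [← Finset.sum_range_reflect
      (fun k => (((j : ℕ).choose k : ZMod 2)) * w (m - 1 - k) i) ((j : ℕ) + 1)]
    apply Finset.sum_congr rfl
    intro k hk
    rw [Finset.mem_range] at hk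
    rw [Pi.smul_apply, smul_eq_mul]
    have e1 : (j : ℕ) + 1 - 1 - k = (j : ℕ) - k := by omega
    have e2 : (j : ℕ).choose ((j : ℕ) - k) = (j : ℕ).choose k := Nat.choose_symm (by omega)
    have e3 : m - 1 - ((j : ℕ) - k) = m - 1 - (j : ℕ) + k := by omega
    rw [e1, e2, e3]
  have hact : ∀ j : Fin m,
      B.mulVec (nuv m B 0 (m - 1 - (j : ℕ)) (j : ℕ)) = nuv m B (m - 1 - (j : ℕ)) (j : ℕ) 0 :=
    fun j => nuv_act hbot (by omega)
  have hBU : B * (L * (Pmat m * Jmat m)) = L * (Jmat m * Pmat m) := by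
    ext i j
    rw [Matrix.mul_apply, Finset.sum_congr rfl (fun k _ => by rw [hUcol j k])]
    have hmv : (∑ k, B i k * nuv m B 0 (m - 1 - (j : ℕ)) (j : ℕ) k)
        = (B.mulVec (nuv m B 0 (m - 1 - (j : ℕ)) (j : ℕ))) i := rfl
    rw [hmv, hact j]
    exact (hVcol j i).symm
  have hQR : (Pmat m * Jmat m) * (Jmat m * Pmat m) = 1 := by
    rw [Matrix.mul_assoc, ← Matrix.mul_assoc (Jmat m) (Jmat m) (Pmat m), Jmat_sq m hm,
      Matrix.one_mul, Pmat_sq]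
  have hBL : B * L = L * (Pmat m * Jmat m) := by
    calc B * L = (B * L) * ((Pmat m * Jmat m) * (Jmat m * Pmat m)) := by
          rw [hQR, Matrix.mul_one]
      _ = (B * (L * (Pmat m * Jmat m))) * (Jmat m * Pmat m) := by
          simp only [Matrix.mul_assoc]
      _ = (L * (Jmat m * Pmat m)) * (Jmat m * Pmat m) := by rw [hBU]
      _ = L * ((Jmat m * Pmat m) * (Jmat m * Pmat m)) := by rw [Matrix.mul_assoc]
      _ = L * (Pmat m * Jmat m) := by rw [Rmat_sq m hm]
  refine ⟨L, hLtri, hLunit, ?_⟩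
  calc B = B * (L * L⁻¹) := by rw [Matrix.mul_nonsing_inv L hdetu, Matrix.mul_one]
    _ = (B * L) * L⁻¹ := by rw [Matrix.mul_assoc]
    _ = (L * (Pmat m * Jmat m)) * L⁻¹ := by rw [hBL]
    _ = L * Pmat m * Jmat m * L⁻¹ := by rw [Matrix.mul_assoc L (Pmat m) (Jmat m)]

end Stmt0Aux

theorem stmt0 (m : ℕ) (hm : 1 ≤ m) (B : Matrix (Fin m) (Fin m) (ZMod 2)) :
    IsNet 0 m 3 (digitalNet m 3 ![1, B, B ^ 2]) ↔
      ∃ L : Matrix (Fin m) (Fin m) (ZMod 2),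
        IsLowerTri L ∧ IsUnit L ∧ B = L * Pmat m * Jmat m * L⁻¹ := by
  rw [Stmt0Aux.isNet_iff_UCond m (![1, B, B ^ 2]), Stmt0Aux.UCond_iff_KCond]
  constructor
  · intro hK
    exact Stmt0Aux.exists_L m hm B hK
  · rintro ⟨L, h1, h2, h3⟩
    exact Stmt0Aux.KCond_of_conj m hm B L h1 h2 h3
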